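/- Let G be the group of order 16 given by generators σ₂, σ₃, γ with relations σ₂² = σ₃² = 1, σ₂σ₃ = σ₃σ₂, γσ₂γ⁻¹ = σ₃, γσ₃γ⁻¹ = σ₂, γ⁴ = 1, γ² central (i.e., G ≅ (ℤ/2ℤ × ℤ/2ℤ) ⋊ ℤ/4ℤ with γ swapping the factors). Let M = (ℤ/2ℤ)² with G acting through γ by swapping coordinates and σ₂, σ₃ acting trivially. Then H¹(G, M) ≅ (ℤ/2ℤ)³. -/

import Mathlib

/-- The swap automorphism of `Multiplicative ((ℤ/2ℤ)²)`. -/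
def swapMulAut : MulAut (Multiplicative (ZMod 2 × ZMod 2)) :=
  AddEquiv.toMultiplicative
    (AddEquiv.prodComm : (ZMod 2 × ZMod 2) ≃+ (ZMod 2 × ZMod 2))

lemma swapMulAut_sq : swapMulAut ^ 2 = 1 := by
  rw [sq]
  ext m <;> rfl

/-- The homomorphism `ℤ/4ℤ → Aut((ℤ/2ℤ)²)` sending the generator to the swap. -/
def phi19 : Multiplicative (ZMod 4) →* MulAut (Multiplicative (ZMod 2 × ZMod 2)) where
  toFun x := swapMulAut ^ (Multiplicative.toAdd x).val
  map_one' := by simp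
  map_mul' x y := by
    have h : ∀ m : ℕ, swapMulAut ^ m = swapMulAut ^ (m % 2) :=
      fun m => pow_eq_pow_mod m swapMulAut_sq
    show swapMulAut ^ (Multiplicative.toAdd (x * y)).val =
      swapMulAut ^ (Multiplicative.toAdd x).val * swapMulAut ^ (Multiplicative.toAdd y).val
    rw [← pow_add, h, h ((Multiplicative.toAdd x).val + (Multiplicative.toAdd y).val)]
    congr 1
    simp only [toAdd_mul, ZMod.val_add]
    exact Nat.mod_mod_of_dvd _ (by norm_num)

/-- `G`, the group of order 16: `(ℤ/2ℤ × ℤ/2ℤ) ⋊ ℤ/4ℤ` with the generator `γ` of `ℤ/4ℤ`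
acting by swapping the two factors (so `γ²` is central and acts trivially on the normal
subgroup). -/
abbrev G19 : Type :=
  SemidirectProduct (Multiplicative (ZMod 2 × ZMod 2)) (Multiplicative (ZMod 4)) phi19

/-- The swap automorphism of the additive group `M = (ℤ/2ℤ)²`. -/
def swapAddAut : Multiplicative (AddAut (ZMod 2 × ZMod 2)) :=
  Multiplicative.ofAdd (AddEquiv.prodComm : (ZMod 2 × ZMod 2) ≃+ (ZMod 2 × ZMod 2))

lemma swapAddAut_sq : swapAddAut ^ 2 = 1 := by
  rw [sq]
  ext m <;> rfl

/-- The action of `ℤ/4ℤ` on `M = (ℤ/2ℤ)²` through the swap. -/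
def phiAdd19 : Multiplicative (ZMod 4) →* Multiplicative (AddAut (ZMod 2 × ZMod 2)) where
  toFun x := swapAddAut ^ (Multiplicative.toAdd x).val
  map_one' := by simp
  map_mul' x y := by
    have h : ∀ m : ℕ, swapAddAut ^ m = swapAddAut ^ (m % 2) :=
      fun m => pow_eq_pow_mod m swapAddAut_sq
    show swapAddAut ^ (Multiplicative.toAdd (x * y)).val =
      swapAddAut ^ (Multiplicative.toAdd x).val * swapAddAut ^ (Multiplicative.toAdd y).val
    rw [← pow_add, h, h ((Multiplicative.toAdd x).val + (Multiplicative.toAdd y).val)]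
    congr 1
    simp only [toAdd_mul, ZMod.val_add]
    exact Nat.mod_mod_of_dvd _ (by norm_num)

/-- The action of `G` on `M = (ℤ/2ℤ)²`: `γ` swaps the coordinates, while `σ₂, σ₃`
(the elements of the normal subgroup `(ℤ/2ℤ)²`) act trivially. -/
noncomputable instance : DistribMulAction G19 (ZMod 2 × ZMod 2) :=
  DistribMulAction.compHom _
    (({ toFun := fun e => (Multiplicative.toAdd e).toAddMonoidHom, map_one' := rfl,
        map_mul' := fun _ _ => rfl } :
        Multiplicative (AddAut (ZMod 2 × ZMod 2)) →* AddMonoid.End (ZMod 2 × ZMod 2)).comp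
      (phiAdd19.comp SemidirectProduct.rightHom))

/-- The group of crossed homomorphisms `G → M`. -/
def Z19 : AddSubgroup (G19 → ZMod 2 × ZMod 2) where
  carrier := {u | ∀ g h : G19, u (g * h) = u g + g • u h}
  zero_mem' := by intro g h; simp
  add_mem' := by
    intro u v hu hv g h
    simp only [Pi.add_apply, hu g h, hv g h, smul_add]
    abel
  neg_mem' := by
    intro u hu g h
    simp only [Pi.neg_apply, hu g h, smul_neg]
    abel

/-- The subgroup of principal crossed homomorphisms `g ↦ g•m − m`. -/
noncomputable def B19 : AddSubgroup (G19 → ZMod 2 × ZMod 2) :=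
  (AddMonoidHom.mk' (fun m : ZMod 2 × ZMod 2 => fun g : G19 => g • m - m)
    (by
      intro a b
      funext g
      simp only [Pi.add_apply, smul_add]
      abel)).range

/-- `H¹(G, M) ≅ (ℤ/2ℤ)³` for the order-16 group `G = (ℤ/2ℤ)² ⋊ ℤ/4ℤ` acting on
`M = (ℤ/2ℤ)²` through the coordinate swap; `H¹` is the group of crossed homomorphisms
modulo principal ones. -/

instance G19.fintype : Fintype G19 :=
  Fintype.ofEquiv (Multiplicative (ZMod 2 × ZMod 2) × Multiplicative (ZMod 4))
    { toFun := fun p => ⟨p.1, p.2⟩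
      invFun := fun g => (g.left, g.right)
      left_inv := fun _ => rfl
      right_inv := fun _ => rfl }

def s2 : G19 := ⟨Multiplicative.ofAdd (1, 0), 1⟩
def s3 : G19 := ⟨Multiplicative.ofAdd (0, 1), 1⟩
def cc : G19 := ⟨1, Multiplicative.ofAdd 1⟩

lemma smul_def19 (g : G19) (x : ZMod 2 × ZMod 2) :
    g • x = (Multiplicative.toAdd (swapAddAut ^ (Multiplicative.toAdd g.right).val)) x := rfl

lemma swap_pow_apply (k : ℕ) (x : ZMod 2 × ZMod 2) :
    (Multiplicative.toAdd (swapAddAut ^ k)) x = if k % 2 = 0 then x else (x.2, x.1) := by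
  rw [pow_eq_pow_mod k swapAddAut_sq]
  rcases Nat.mod_two_eq_zero_or_one k with h | h <;> rw [h]
  · rw [pow_zero, if_pos rfl]; rfl
  · simp only [pow_one, if_neg one_ne_zero]
    rfl

lemma smul_apply19 (g : G19) (x : ZMod 2 × ZMod 2) :
    g • x = if (Multiplicative.toAdd g.right).val % 2 = 0 then x else (x.2, x.1) := by
  rw [smul_def19, swap_pow_apply]

/-- first explicit cocycle -/
def cf1 : G19 → ZMod 2 × ZMod 2 := fun g => Multiplicative.toAdd g.left

/-- second explicit cocycle -/
def cf2 : G19 → ZMod 2 × ZMod 2 := fun g =>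
  ((Multiplicative.toAdd g.left).2, (Multiplicative.toAdd g.left).1)

/-- third explicit cocycle -/
def cf3 : G19 → ZMod 2 × ZMod 2 := fun g =>
  (if (Multiplicative.toAdd g.right) = 1 ∨ (Multiplicative.toAdd g.right) = 2 then 1 else 0,
   if (Multiplicative.toAdd g.right) = 2 ∨ (Multiplicative.toAdd g.right) = 3 then 1 else 0)

lemma cf1_mem : cf1 ∈ Z19 := by
  show ∀ g h : G19, cf1 (g * h) = cf1 g + g • cf1 h
  decide
lemma cf2_mem : cf2 ∈ Z19 := by
  show ∀ g h : G19, cf2 (g * h) = cf2 g + g • cf2 h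
  decide
lemma cf3_mem : cf3 ∈ Z19 := by
  show ∀ g h : G19, cf3 (g * h) = cf3 g + g • cf3 h
  decide

/-- the evaluation homomorphism -/
def phiH : ↥Z19 →+ ZMod 2 × ZMod 2 × ZMod 2 where
  toFun u := ((u.1 s2).1, (u.1 s2).2, (u.1 cc).1 + (u.1 cc).2)
  map_zero' := rfl
  map_add' u v := by
    show (((u.1 + v.1) s2).1, ((u.1 + v.1) s2).2, ((u.1 + v.1) cc).1 + ((u.1 + v.1) cc).2) = _
    simp only [Pi.add_apply, Prod.fst_add, Prod.snd_add, Prod.mk_add_mk]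
    congr 1
    abel


lemma neg_zmod2 : ∀ a : ZMod 2, -a = a := by decide

lemma add_self_zmod2 : ∀ a : ZMod 2, a + a = 0 := by decide

lemma trivial_smul (n : Multiplicative (ZMod 2 × ZMod 2)) (y : ZMod 2 × ZMod 2) :
    (⟨n, 1⟩ : G19) • y = y := rfl

lemma cc_smul (y : ZMod 2 × ZMod 2) : cc • y = (y.2, y.1) := rfl

lemma s2_smul (y : ZMod 2 × ZMod 2) : s2 • y = y := rfl

lemma s3_smul (y : ZMod 2 × ZMod 2) : s3 • y = y := rfl

lemma c2_smul (y : ZMod 2 × ZMod 2) :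
    (⟨1, Multiplicative.ofAdd 2⟩ : G19) • y = y := rfl

lemma c3_smul (y : ZMod 2 × ZMod 2) :
    (⟨1, Multiplicative.ofAdd 3⟩ : G19) • y = (y.2, y.1) := rfl

lemma smulA (n : Multiplicative (ZMod 2 × ZMod 2)) (y : ZMod 2 × ZMod 2) :
    (⟨n, Multiplicative.ofAdd 0⟩ : G19) • y = y := rfl

lemma smulB (n : Multiplicative (ZMod 2 × ZMod 2)) (y : ZMod 2 × ZMod 2) :
    (⟨n, Multiplicative.ofAdd 1⟩ : G19) • y = (y.2, y.1) := rfl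

lemma smulC (n : Multiplicative (ZMod 2 × ZMod 2)) (y : ZMod 2 × ZMod 2) :
    (⟨n, Multiplicative.ofAdd 2⟩ : G19) • y = y := rfl

lemma smulD (n : Multiplicative (ZMod 2 × ZMod 2)) (y : ZMod 2 × ZMod 2) :
    (⟨n, Multiplicative.ofAdd 3⟩ : G19) • y = (y.2, y.1) := rfl

lemma ker_sub (u : G19 → ZMod 2 × ZMod 2) (hu : u ∈ Z19)
    (h2a : (u s2).1 = 0) (h2b : (u s2).2 = 0) (h3 : (u cc).1 + (u cc).2 = 0) :
    u ∈ B19 := by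
  have hu' : ∀ g h : G19, u (g * h) = u g + g • u h := hu
  set x := (u cc).1 with hx
  have hucc : u cc = (x, x) := by
    have h2 : (u cc).2 = -x := eq_neg_of_add_eq_zero_right h3
    rw [neg_zmod2 x] at h2
    exact Prod.ext rfl h2
  have hus2 : u s2 = 0 := Prod.ext h2a h2b
  have h1 : u 1 = 0 := by
    have l := hu' 1 1
    rw [one_mul, one_smul] at l
    exact (left_eq_add.mp l)
  have hus3 : u s3 = 0 := by
    have e : cc * s2 = s3 * cc := by decide
    have l := hu' cc s2
    rw [e, hu' s3 cc, s3_smul, hus2, smul_zero, add_zero] at l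
    exact add_eq_right.mp l
  have hN : ∀ n : Multiplicative (ZMod 2 × ZMod 2), u ⟨n, 1⟩ = 0 := by
    intro n
    have h4 := (show ∀ n : Multiplicative (ZMod 2 × ZMod 2),
        n = Multiplicative.ofAdd (0, 0) ∨ n = Multiplicative.ofAdd (1, 0) ∨
        n = Multiplicative.ofAdd (0, 1) ∨ n = Multiplicative.ofAdd (1, 1) by decide) n
    rcases h4 with h4 | h4 | h4 | h4 <;> subst h4
    · have e : (⟨Multiplicative.ofAdd (0, 0), 1⟩ : G19) = 1 := by decide
      rw [e]; exact h1
    · exact hus2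
    · exact hus3
    · have e : s2 * s3 = (⟨Multiplicative.ofAdd (1, 1), 1⟩ : G19) := by decide
      rw [← e, hu' s2 s3, s2_smul, hus2, hus3, add_zero]
  have hc2 : u ⟨1, Multiplicative.ofAdd 2⟩ = 0 := by
    have e : cc * cc = (⟨1, Multiplicative.ofAdd 2⟩ : G19) := by decide
    rw [← e, hu' cc cc, hucc, cc_smul]
    exact Prod.ext (add_self_zmod2 x) (add_self_zmod2 x)
  have hc3 : u ⟨1, Multiplicative.ofAdd 3⟩ = (x, x) := by
    have e : (⟨1, Multiplicative.ofAdd 2⟩ : G19) * cc = ⟨1, Multiplicative.ofAdd 3⟩ := by decide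
    rw [← e, hu' _ cc, hc2, c2_smul, hucc, zero_add]
  have hsplit : ∀ (n : Multiplicative (ZMod 2 × ZMod 2)) (t : Multiplicative (ZMod 4)),
      u ⟨n, t⟩ = u ⟨1, t⟩ := by
    intro n t
    have e : (⟨n, 1⟩ : G19) * ⟨1, t⟩ = ⟨n, t⟩ := by
      ext
      · simp [SemidirectProduct.mul_left]
      · simp [SemidirectProduct.mul_right]
      · show Multiplicative.toAdd (1 * t) = Multiplicative.toAdd t; rw [one_mul]
    rw [← e, hu' ⟨n, 1⟩ ⟨1, t⟩, trivial_smul, hN, zero_add]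
  refine ⟨(x, 0), ?_⟩
  funext g
  obtain ⟨n, t⟩ := g
  show (⟨n, t⟩ : G19) • (x, 0) - (x, 0) = u ⟨n, t⟩
  rw [hsplit]
  have h4 := (show ∀ t : Multiplicative (ZMod 4),
      t = Multiplicative.ofAdd 0 ∨ t = Multiplicative.ofAdd 1 ∨
      t = Multiplicative.ofAdd 2 ∨ t = Multiplicative.ofAdd 3 by decide) t
  rcases h4 with h4 | h4 | h4 | h4 <;> subst h4
  · have e : (⟨1, Multiplicative.ofAdd 0⟩ : G19) = 1 := by decide
    rw [e, h1, smulA, sub_self]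
  · rw [show (⟨1, Multiplicative.ofAdd 1⟩ : G19) = cc from rfl, hucc, smulB]
    show ((0 : ZMod 2), x) - (x, 0) = (x, x)
    exact Prod.ext (by rw [Prod.fst_sub]; show (0 : ZMod 2) - x = x; rw [zero_sub, neg_zmod2 x])
      (by rw [Prod.snd_sub]; show x - (0 : ZMod 2) = x; rw [sub_zero])
  · rw [hc2, smulC, sub_self]
  · rw [hc3, smulD]
    show ((0 : ZMod 2), x) - (x, 0) = (x, x)
    exact Prod.ext (by rw [Prod.fst_sub]; show (0 : ZMod 2) - x = x; rw [zero_sub, neg_zmod2 x])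
      (by rw [Prod.snd_sub]; show x - (0 : ZMod 2) = x; rw [sub_zero])

lemma ker_eq : phiH.ker = B19.addSubgroupOf Z19 := by
  ext u
  rw [AddMonoidHom.mem_ker, AddSubgroup.mem_addSubgroupOf]
  constructor
  · intro h
    have h' : ((u.1 s2).1, (u.1 s2).2, (u.1 cc).1 + (u.1 cc).2)
        = ((0 : ZMod 2), (0 : ZMod 2), (0 : ZMod 2)) := h
    rw [Prod.ext_iff, Prod.ext_iff] at h'
    exact ker_sub u.1 u.2 h'.1 h'.2.1 h'.2.2
  · rintro ⟨m, hm⟩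
    show ((u.1 s2).1, (u.1 s2).2, (u.1 cc).1 + (u.1 cc).2) = 0
    rw [← hm]
    show (((s2 • m - m).1 : ZMod 2), ((s2 • m - m).2 : ZMod 2),
      ((cc • m - m).1 : ZMod 2) + (cc • m - m).2) = 0
    rw [s2_smul, cc_smul]
    refine Prod.ext (by simp) (Prod.ext (by simp) ?_)
    show (m.2 - m.1) + (m.1 - m.2) = 0
    ring

lemma phiH_surj : Function.Surjective phiH := by
  intro ⟨x, y, z⟩
  refine ⟨x.val • ⟨cf1, cf1_mem⟩ + y.val • ⟨cf2, cf2_mem⟩ + z.val • ⟨cf3, cf3_mem⟩, ?_⟩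
  have h1 : phiH ⟨cf1, cf1_mem⟩ = (1, 0, 0) := by decide
  have h2 : phiH ⟨cf2, cf2_mem⟩ = (0, 1, 0) := by decide
  have h3 : phiH ⟨cf3, cf3_mem⟩ = (0, 0, 1) := by decide
  rw [map_add, map_add, map_nsmul, map_nsmul, map_nsmul, h1, h2, h3]
  ext <;> simp [Prod.smul_def, nsmul_eq_mul, ZMod.natCast_val, ZMod.cast_id]

theorem stmt19 :
    Nonempty ((↥Z19 ⧸ B19.addSubgroupOf Z19) ≃+ (ZMod 2 × ZMod 2 × ZMod 2)) :=
  ⟨(QuotientAddGroup.quotientAddEquivOfEq ker_eq.symm).trans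
    (QuotientAddGroup.quotientKerEquivOfSurjective phiH phiH_surj)⟩
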